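/- arXiv:2012.00673 — 2 statements merged into one kernel-verified Lean document; each statement's English description precedes it below -/
import Mathlib

section
/- Let n ≥ 1 be an integer, p ∈ (0,1), Sp ∈ [0,1], and s_1,…,s_n ∈ [0,1]. Consider the probability model in which X_1,…,X_n are independent Bernoulli(p) random variables and, conditionally on S = X_1+⋯+X_n, the pool test outcome T ∈ {0,1} satisfies P(T = 1 | S = k) = s_k for 1 ≤ k ≤ n and P(T = 1 | S = 0) = 1-Sp. If P(T=0) > 0, then the posterior probability that a given subject is positive after a negative pool test is P(X_1 = 1 | T = 0) = p·Σ_{k=1}^n (1-s_k)·Pr(k-1;n-1,p) / [ Σ_{k=1}^n (1-s_k)·Pr(k;n,p) + Sp·(1-p)^n ]. -/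
open Finset


/-- `Pr k n p = C(n,k) p^k (1-p)^(n-k)`: binomial probability. -/
noncomputable def Pr (k n : ℕ) (p : ℝ) : ℝ :=
  (n.choose k : ℝ) * p ^ k * (1 - p) ^ (n - k)

private lemma sum_powerset_card' {α : Type*} [DecidableEq α] (t : Finset α) (g : ℕ → ℝ) :
    ∑ A ∈ t.powerset, g A.card
      = ∑ k ∈ Finset.range (t.card + 1), (t.card.choose k : ℝ) * g k := by
  rw [Finset.powerset_card_disjiUnion]; refine (Finset.sum_disjiUnion _ _ _).trans ?_
  refine Finset.sum_congr rfl fun k _ => ?_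
  calc ∑ A ∈ Finset.powersetCard k t, g A.card
      = ∑ A ∈ Finset.powersetCard k t, g k := by
        refine Finset.sum_congr rfl fun A hA => ?_
        rw [(Finset.mem_powersetCard.mp hA).2]
    _ = _ := by rw [Finset.sum_const, Finset.card_powersetCard, nsmul_eq_mul]

private def boolEquiv (n : ℕ) : (Fin n → Bool) ≃ Finset (Fin n) where
  toFun ω := Finset.univ.filter fun i => ω i = true
  invFun A := fun i => decide (i ∈ A)
  left_inv ω := by funext i; simp
  right_inv A := by ext i; simp

private lemma prod_ite_mem_card {n : ℕ} (p : ℝ) (A : Finset (Fin n)) :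
    (∏ i, if i ∈ A then p else 1 - p) = p ^ A.card * (1 - p) ^ (n - A.card) := by
  rw [Finset.prod_ite, Finset.prod_const, Finset.prod_const]
  congr 2
  · rw [Finset.filter_univ_mem]
  · have h1 := Finset.card_filter_add_card_filter_not (s := (univ : Finset (Fin n)))
      (p := fun i => i ∈ A)
    rw [Finset.filter_univ_mem] at h1
    simp only [Finset.card_univ, Fintype.card_fin] at h1
    omega

/-- transport a sum over Bernoulli vectors to a sum over subsets -/
private lemma sum_bool_eq_sum_finset (n : ℕ) (F : (Fin n → Bool) → ℝ) :
    ∑ ω : Fin n → Bool, F ω = ∑ A : Finset (Fin n), F ((boolEquiv n).symm A) :=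
  (Equiv.sum_comp (boolEquiv n).symm F).symm

private lemma denom_sum (n : ℕ) (p : ℝ) (f : ℕ → ℝ) :
    ∑ ω : Fin n → Bool,
        (∏ i, if ω i then p else 1 - p) * f ((Finset.univ.filter fun i => ω i = true).card)
      = ∑ k ∈ Finset.range (n + 1), Pr k n p * f k := by
  rw [sum_bool_eq_sum_finset]
  have step : ∀ A : Finset (Fin n),
      (∏ i, if (boolEquiv n).symm A i then p else 1 - p) *
          f ((Finset.univ.filter fun i => (boolEquiv n).symm A i = true).card)
        = p ^ A.card * (1 - p) ^ (n - A.card) * f A.card := by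
    intro A
    simp only [boolEquiv, Equiv.coe_fn_symm_mk, decide_eq_true_eq]
    rw [prod_ite_mem_card, Finset.filter_univ_mem]
  rw [Finset.sum_congr rfl fun A _ => step A]
  rw [← Finset.powerset_univ,
    sum_powerset_card' (univ : Finset (Fin n)) (fun k => p ^ k * (1 - p) ^ (n - k) * f k)]
  simp only [Finset.card_univ, Fintype.card_fin]
  exact Finset.sum_congr rfl fun k _ => by simp [Pr]; ring

private lemma num_sum (n : ℕ) (p : ℝ) (f : ℕ → ℝ) (i0 : Fin n) :
    ∑ ω ∈ Finset.univ.filter (fun ω : Fin n → Bool => ω i0 = true),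
        (∏ i, if ω i then p else 1 - p) * f ((Finset.univ.filter fun i => ω i = true).card)
      = ∑ k ∈ Finset.range (n - 1 + 1),
          ((n - 1).choose k : ℝ) * (p ^ (k + 1) * (1 - p) ^ (n - (k + 1)) * f (k + 1)) := by
  rw [Finset.sum_filter, sum_bool_eq_sum_finset]
  have step : ∀ A : Finset (Fin n),
      (if (boolEquiv n).symm A i0 = true then
          (∏ i, if (boolEquiv n).symm A i then p else 1 - p) *
            f ((Finset.univ.filter fun i => (boolEquiv n).symm A i = true).card)
        else 0)
        = if i0 ∈ A then p ^ A.card * (1 - p) ^ (n - A.card) * f A.card else 0 := by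
    intro A
    simp only [boolEquiv, Equiv.coe_fn_symm_mk, decide_eq_true_eq]
    rw [prod_ite_mem_card, Finset.filter_univ_mem]
  rw [Finset.sum_congr rfl fun A _ => step A, ← Finset.sum_filter]
  rw [show (Finset.univ.filter fun A : Finset (Fin n) => i0 ∈ A)
        = (Finset.univ.erase i0).powerset.image (insert i0) from ?_]
  · rw [Finset.sum_image ?inj]
    case inj =>
      intro B hB C hC h
      simp only [Finset.mem_coe, Finset.mem_powerset] at hB hC
      have hB0 : i0 ∉ B := fun h' => (Finset.mem_erase.mp (hB h')).1 rfl
      have hC0 : i0 ∉ C := fun h' => (Finset.mem_erase.mp (hC h')).1 rfl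
      rw [← Finset.erase_insert hB0, ← Finset.erase_insert hC0, h]
    have step2 : ∀ B ∈ (Finset.univ.erase i0).powerset,
        p ^ (insert i0 B).card * (1 - p) ^ (n - (insert i0 B).card) * f (insert i0 B).card
          = p ^ (B.card + 1) * (1 - p) ^ (n - (B.card + 1)) * f (B.card + 1) := by
      intro B hB
      have hB0 : i0 ∉ B := fun h' =>
        (Finset.mem_erase.mp (Finset.mem_powerset.mp hB h')).1 rfl
      rw [Finset.card_insert_of_notMem hB0]
    rw [Finset.sum_congr rfl step2,
      sum_powerset_card' (Finset.univ.erase i0)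
        (fun k => p ^ (k + 1) * (1 - p) ^ (n - (k + 1)) * f (k + 1)),
      Finset.card_erase_of_mem (Finset.mem_univ i0), Finset.card_univ, Fintype.card_fin]
  · ext A
    simp only [Finset.mem_filter, Finset.mem_univ, true_and, Finset.mem_image,
      Finset.mem_powerset]
    constructor
    · intro hA
      exact ⟨A.erase i0, fun x hx => Finset.mem_erase.mpr
        ⟨(Finset.mem_erase.mp hx).1, Finset.mem_univ x⟩, Finset.insert_erase hA⟩
    · rintro ⟨B, _, rfl⟩
      exact Finset.mem_insert_self i0 B
/-- Model: `X_1, …, X_n` independent Bernoulli(p) on `Fin n → Bool` with product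
weight `w`, `S` the number of positives, and conditionally on `S` the pool test
is positive with probability `q (S ω)`, where `q k = s k` for `k ≥ 1` and
`q 0 = 1 - Sp`.  If `P(T=0) > 0`, the posterior probability that a designated
subject is positive given a negative pool test is
`p·Σ_{k=1}^n (1-s_k)·Pr(k-1;n-1,p) / [Σ_{k=1}^n (1-s_k)·Pr(k;n,p) + Sp·(1-p)^n]`. -/
theorem posterior_positive_given_negative_pool_test (n : ℕ) (hn : 1 ≤ n)
    (p Sp : ℝ) (hp0 : 0 < p) (hp1 : p < 1) (hSp : Sp ∈ Set.Icc (0 : ℝ) 1)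
    (s : ℕ → ℝ) (hs : ∀ k ∈ Finset.Icc 1 n, s k ∈ Set.Icc (0 : ℝ) 1)
    (S : (Fin n → Bool) → ℕ)
    (hS : S = fun ω => (Finset.univ.filter fun i => ω i = true).card)
    (q : ℕ → ℝ) (hq : q = fun k => if k = 0 then 1 - Sp else s k)
    (w : (Fin n → Bool) → ℝ)
    (hw : w = fun ω => ∏ i, (if ω i then p else 1 - p))
    (hT0 : 0 < ∑ ω : Fin n → Bool, w ω * (1 - q (S ω))) :
    (∑ ω ∈ Finset.univ.filter (fun ω : Fin n → Bool => ω ⟨0, by omega⟩ = true),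
        w ω * (1 - q (S ω))) /
      (∑ ω : Fin n → Bool, w ω * (1 - q (S ω)))
    = p * (∑ k ∈ Finset.Icc 1 n, (1 - s k) * Pr (k - 1) (n - 1) p)
        / ((∑ k ∈ Finset.Icc 1 n, (1 - s k) * Pr k n p) + Sp * (1 - p) ^ n) := by
  set f : ℕ → ℝ := fun k => 1 - (if k = 0 then 1 - Sp else s k) with hf
  have key : ∀ ω : Fin n → Bool,
      w ω * (1 - q (S ω))
        = (∏ i, if ω i then p else 1 - p) *
            f ((Finset.univ.filter fun i => ω i = true).card) := by
    intro ω; rw [hw, hS, hq, hf]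
  have hnum : (∑ ω ∈ Finset.univ.filter (fun ω : Fin n → Bool => ω ⟨0, by omega⟩ = true),
      (∏ i, if ω i then p else 1 - p) * f ((Finset.univ.filter fun i => ω i = true).card))
      = p * ∑ k ∈ Finset.Icc 1 n, (1 - s k) * Pr (k - 1) (n - 1) p := by
    rw [num_sum n p f ⟨0, by omega⟩, show n - 1 + 1 = n from by omega, Finset.mul_sum]
    refine Finset.sum_nbij' (i := fun k => k + 1) (j := fun k => k - 1)
      (fun k hk => ?_) (fun k hk => ?_) (fun k hk => ?_) (fun k hk => ?_) (fun k hk => ?_)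
    · simp only [Finset.mem_range] at hk; simp only [Finset.mem_Icc]; omega
    · simp only [Finset.mem_Icc] at hk; simp only [Finset.mem_range]; omega
    · show k + 1 - 1 = k; omega
    · simp only [Finset.mem_Icc] at hk; show k - 1 + 1 = k; omega
    · simp only [Finset.mem_range] at hk
      have h1 : n - (k + 1) = n - 1 - k := by omega
      have h2 : k + 1 ≠ 0 := by omega
      simp only [hf, if_neg h2, Nat.add_sub_cancel, h1, Pr]
      ring
  have hden : (∑ ω : Fin n → Bool,
      (∏ i, if ω i then p else 1 - p) * f ((Finset.univ.filter fun i => ω i = true).card))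
      = (∑ k ∈ Finset.Icc 1 n, (1 - s k) * Pr k n p) + Sp * (1 - p) ^ n := by
    rw [denom_sum n p f, Finset.range_eq_Ico,
      Finset.sum_eq_sum_Ico_succ_bot (by omega : 0 < n + 1), Finset.Ico_add_one_right_eq_Icc]
    have h0 : Pr 0 n p * f 0 = Sp * (1 - p) ^ n := by
      simp only [hf, Pr, if_pos rfl, Nat.choose_zero_right, pow_zero, Nat.sub_zero,
        Nat.cast_one, reduceIte]
      ring
    have hrest : ∀ k ∈ Finset.Icc 1 n, Pr k n p * f k = (1 - s k) * Pr k n p := by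
      intro k hk
      have hk1 : k ≠ 0 := by simp only [Finset.mem_Icc] at hk; omega
      simp only [hf, if_neg hk1]; ring
    rw [h0, Finset.sum_congr rfl hrest, add_comm]
  rw [Finset.sum_congr rfl fun ω _ => key ω, Finset.sum_congr rfl fun ω _ => key ω,
    hnum, hden]
end

section
/- Let n ≥ 1, r ≥ 2 be integers, p ∈ [0,1], Sp ∈ [0,1], s_1,…,s_n ∈ [0,1], and 2 ≤ l ≤ r. Define p_P = 1-(1-p)^n. In the modified Dorfman procedure, the probability that a given pool receives an l-th pool test (i.e. that its first l-1 independent pool tests are all negative) equals (1-p_P)·Sp^{l-1} + Σ_{k=1}^n (1-s_k)^{l-1}·Pr(k;n,p). -/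
/-- Model: `X_1, …, X_n` independent Bernoulli(p) on `Fin n → Bool` with product
weight `w`, `S` the number of positives. Given `S = k`, each of the repeated
pool tests is independently negative with probability `Sp` if `k = 0` and
`1 - s k` if `k ≥ 1`. The probability that a pool receives an `l`-th test,
i.e. that its first `l-1` tests are all negative, equals
`(1-p_P)·Sp^{l-1} + Σ_{k=1}^n (1-s_k)^{l-1}·Pr(k;n,p)` with `p_P = 1-(1-p)^n`. -/
theorem prob_lth_pool_test (n r l : ℕ) (hn : 1 ≤ n) (hr : 2 ≤ r)
    (hl2 : 2 ≤ l) (hlr : l ≤ r)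
    (p Sp : ℝ) (hp : p ∈ Set.Icc (0 : ℝ) 1) (hSp : Sp ∈ Set.Icc (0 : ℝ) 1)
    (s : ℕ → ℝ) (hs : ∀ k ∈ Finset.Icc 1 n, s k ∈ Set.Icc (0 : ℝ) 1)
    (S : (Fin n → Bool) → ℕ)
    (hS : S = fun ω => (Finset.univ.filter fun i => ω i = true).card)
    (w : (Fin n → Bool) → ℝ)
    (hw : w = fun ω => ∏ i, (if ω i then p else 1 - p)) :
    (∑ ω : Fin n → Bool,
        w ω * (if S ω = 0 then Sp else 1 - s (S ω)) ^ (l - 1))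
      = (1 - (1 - (1 - p) ^ n)) * Sp ^ (l - 1)
        + ∑ k ∈ Finset.Icc 1 n, (1 - s k) ^ (l - 1) * Pr k n p := by
  classical
  set g : ℕ → ℝ := fun k => (if k = 0 then Sp else 1 - s k) ^ (l - 1) with hg
  have hbij : Function.Bijective (fun A : Finset (Fin n) => fun i => decide (i ∈ A)) := by
    constructor
    · intro A B hAB
      ext i
      have := congrFun hAB i
      simpa using this
    · intro ω
      refine ⟨Finset.univ.filter (fun i => ω i = true), ?_⟩
      funext i
      by_cases h : ω i <;> simp [h]
  have key : ∀ A : Finset (Fin n),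
      w (fun i => decide (i ∈ A)) * g (S (fun i => decide (i ∈ A)))
        = p ^ A.card * (1 - p) ^ (n - A.card) * g A.card := by
    intro A
    have hSA : S (fun i => decide (i ∈ A)) = A.card := by
      rw [hS]
      have : Finset.univ.filter (fun i => decide (i ∈ A) = true) = A := by
        ext i; simp
      simp only [this]
    have hwA : w (fun i => decide (i ∈ A)) = p ^ A.card * (1 - p) ^ (n - A.card) := by
      rw [hw]
      simp only [decide_eq_true_eq]
      rw [Finset.prod_ite]
      simp only [Finset.prod_const]
      congr 1
      · congr 1; rw [Finset.filter_mem_eq_inter]; simp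
      · congr 1
        have : Finset.univ.filter (fun i : Fin n => ¬ i ∈ A) = Aᶜ := by
          ext i; simp
        rw [this, Finset.card_compl]
        simp
    rw [hSA, hwA]
  calc (∑ ω : Fin n → Bool, w ω * g (S ω))
      = ∑ A : Finset (Fin n), p ^ A.card * (1 - p) ^ (n - A.card) * g A.card :=
        (Fintype.sum_bijective _ hbij _ _ (fun A => (key A).symm)).symm
    _ = ∑ A ∈ (Finset.univ : Finset (Fin n)).powerset,
          p ^ A.card * (1 - p) ^ (n - A.card) * g A.card := by
        rw [Finset.powerset_univ]
    _ = ∑ j ∈ Finset.range (n + 1), ∑ A ∈ Finset.powersetCard j (Finset.univ : Finset (Fin n)),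
          p ^ A.card * (1 - p) ^ (n - A.card) * g A.card := by
        rw [Finset.sum_powerset]; simp
    _ = ∑ j ∈ Finset.range (n + 1), (n.choose j : ℝ) * (p ^ j * (1 - p) ^ (n - j) * g j) := by
        refine Finset.sum_congr rfl fun j hj => ?_
        have h1 : ∀ A ∈ Finset.powersetCard j (Finset.univ : Finset (Fin n)),
            p ^ A.card * (1 - p) ^ (n - A.card) * g A.card
              = p ^ j * (1 - p) ^ (n - j) * g j := fun A hA => by
          rw [(Finset.mem_powersetCard.mp hA).2]
        rw [Finset.sum_congr rfl h1, Finset.sum_const, Finset.card_powersetCard,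
          Finset.card_univ, Fintype.card_fin, nsmul_eq_mul]
    _ = (1 - (1 - (1 - p) ^ n)) * Sp ^ (l - 1)
        + ∑ k ∈ Finset.Icc 1 n, (1 - s k) ^ (l - 1) * Pr k n p := by
        rw [Finset.sum_range_succ']
        have h0 : (n.choose 0 : ℝ) * (p ^ 0 * (1 - p) ^ (n - 0) * g 0)
            = (1 - (1 - (1 - p) ^ n)) * Sp ^ (l - 1) := by
          simp [hg]
        rw [h0, add_comm]
        congr 1
        have : ∑ k ∈ Finset.Icc 1 n, (1 - s k) ^ (l - 1) * Pr k n p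
            = ∑ i ∈ Finset.range n, (1 - s (1 + i)) ^ (l - 1) * Pr (1 + i) n p := by
          rw [← Finset.Ico_add_one_right_eq_Icc, Finset.sum_Ico_eq_sum_range]
          simp
        rw [this]
        refine Finset.sum_congr rfl fun i hi => ?_
        have : g (i + 1) = (1 - s (i + 1)) ^ (l - 1) := by simp [hg]
        rw [this, Pr, add_comm 1 i]
        ring
end
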